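/- For the Fokker–Planck equation ∂u/∂t = −∂[(γκ_d f(x) − γx)u]/∂x + (σ²/2)∂²(xu)/∂x² with reflecting boundary at x = 0, the function u*(x) = C e^{−2γx/σ²} x^{κ_e/Λ − 1}(Λ + Δxⁿ)^θ with κ_e = 2γκ_d/σ², θ = (κ_e/(nΔ))(1 − Δ/Λ), and f(x) = (1+xⁿ)/(Λ+Δxⁿ), satisfies the zero-current condition (γκ_d f(x) − γx)u*(x) − (σ²/2)(d/dx)(x u*(x)) = 0 for all x > 0. -/

import Mathlib

/-- Degradation-noise stationary density: u*(x) = C e^{−2γx/σ²} x^{κ_e/Λ−1}(Λ+Δxⁿ)^θ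
with κ_e = 2γκ_d/σ² satisfies the zero probability current condition
(γκ_d f(x) − γx)u*(x) − (σ²/2)(d/dx)(x u*(x)) = 0 for all x > 0. -/
theorem degradation_noise_zero_current
    (C γ σ κd Λ Δ : ℝ) (n : ℕ) (hC : 0 < C) (hγ : 0 < γ) (hσ : 0 < σ) (hκd : 0 < κd)
    (hΛ : 0 < Λ) (hΔ : 0 < Δ) (hn : 1 ≤ n)
    (κe : ℝ) (hκe : κe = 2 * γ * κd / σ ^ 2)
    (θ : ℝ) (hθ : θ = κe / (n * Δ) * (1 - Δ / Λ))
    (f : ℝ → ℝ) (hf : ∀ x, f x = (1 + x ^ n) / (Λ + Δ * x ^ n))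
    (u : ℝ → ℝ)
    (hu : ∀ x, u x = C * Real.exp (-2 * γ * x / σ ^ 2) * x ^ (κe / Λ - 1) *
        (Λ + Δ * x ^ n) ^ θ) :
    ∀ x : ℝ, 0 < x →
      (γ * κd * f x - γ * x) * u x - σ ^ 2 / 2 * deriv (fun y => y * u y) x = 0 := by
  intro x hx
  have hσ2 : (σ : ℝ) ^ 2 ≠ 0 := by positivity
  have hP : 0 < Λ + Δ * x ^ n := by positivity
  have hn0 : (n : ℝ) ≠ 0 := by exact_mod_cast Nat.pos_of_ne_zero (by omega) |>.ne'
  set b : ℝ := κe / Λ - 1 with hb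
  have hx1 : x ^ (n - 1) * x = x ^ n := by
    rw [← pow_succ]; congr 1; omega
  -- derivative pieces
  have hE : HasDerivAt (fun y : ℝ => Real.exp (-2 * γ * y / σ ^ 2))
      (Real.exp (-2 * γ * x / σ ^ 2) * (-2 * γ / σ ^ 2)) x := by
    have h0 : (fun y : ℝ => -2 * γ * y / σ ^ 2) = fun y : ℝ => (-2 * γ / σ ^ 2) * y := by
      funext y; ring
    have h : HasDerivAt (fun y : ℝ => -2 * γ * y / σ ^ 2) (-2 * γ / σ ^ 2) x := by
      rw [h0]; simpa using (hasDerivAt_id x).const_mul (-2 * γ / σ ^ 2)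
    simpa using h.exp
  have hX : HasDerivAt (fun y : ℝ => y ^ b) (b * x ^ (b - 1)) x :=
    Real.hasDerivAt_rpow_const (Or.inl hx.ne')
  have hPin : HasDerivAt (fun y : ℝ => Λ + Δ * y ^ n) (Δ * ↑n * x ^ n / x) x := by
    have h := ((hasDerivAt_pow n x).const_mul Δ).const_add Λ
    refine h.congr_deriv (Eq.symm ?_)
    rw [div_eq_iff hx.ne']
    linear_combination (-(Δ * (n : ℝ))) * hx1
  have hPθ : HasDerivAt (fun y : ℝ => (Λ + Δ * y ^ n) ^ θ)
      (Δ * ↑n * x ^ n / x * θ * (Λ + Δ * x ^ n) ^ (θ - 1)) x :=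
    hPin.rpow_const (Or.inl hP.ne')
  have hG : HasDerivAt
      (fun y : ℝ => C * Real.exp (-2 * γ * y / σ ^ 2) * y ^ b * (Λ + Δ * y ^ n) ^ θ)
      ((C * (Real.exp (-2 * γ * x / σ ^ 2) * (-2 * γ / σ ^ 2)) * x ^ b
          + C * Real.exp (-2 * γ * x / σ ^ 2) * (b * x ^ (b - 1))) * (Λ + Δ * x ^ n) ^ θ
        + C * Real.exp (-2 * γ * x / σ ^ 2) * x ^ b
          * (Δ * ↑n * x ^ n / x * θ * (Λ + Δ * x ^ n) ^ (θ - 1))) x :=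
    ((hE.const_mul C).mul hX).mul hPθ
  have hF : HasDerivAt (fun y : ℝ => y *
      (C * Real.exp (-2 * γ * y / σ ^ 2) * y ^ b * (Λ + Δ * y ^ n) ^ θ))
      (1 * (C * Real.exp (-2 * γ * x / σ ^ 2) * x ^ b * (Λ + Δ * x ^ n) ^ θ)
        + x * ((C * (Real.exp (-2 * γ * x / σ ^ 2) * (-2 * γ / σ ^ 2)) * x ^ b
          + C * Real.exp (-2 * γ * x / σ ^ 2) * (b * x ^ (b - 1))) * (Λ + Δ * x ^ n) ^ θ
        + C * Real.exp (-2 * γ * x / σ ^ 2) * x ^ b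
          * (Δ * ↑n * x ^ n / x * θ * (Λ + Δ * x ^ n) ^ (θ - 1)))) x :=
    (hasDerivAt_id x).mul hG
  have hfun : (fun y : ℝ => y * u y) = fun y : ℝ => y *
      (C * Real.exp (-2 * γ * y / σ ^ 2) * y ^ b * (Λ + Δ * y ^ n) ^ θ) := by
    funext y; rw [hu y]
  rw [hfun, hF.deriv, hu x, hf x]
  have hxb : x ^ b = x ^ (b - 1) * x := by
    rw [← Real.rpow_add_one hx.ne']; norm_num
  have hPb : (Λ + Δ * x ^ n) ^ θ = (Λ + Δ * x ^ n) ^ (θ - 1) * (Λ + Δ * x ^ n) := by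
    rw [← Real.rpow_add_one hP.ne']; norm_num
  rw [hxb, hPb, hb, hκe, hθ, hκe]
  field_simp
  ring
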